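/- Let L = p^{-1}Z_p ⊕ Z_p ⊕ Z_p ⊕ Z_p with the standard symplectic pairing. If x ∈ L is a primitive element of type (I) and y ∈ L is a primitive element of type (II), then the Z_p-submodule of L generated by x and y is a direct summand of L of rank 2. -/

import Mathlib

/-- The paramodular lattice `L = p⁻¹ℤ_p ⊕ ℤ_p ⊕ ℤ_p ⊕ ℤ_p ⊆ ℚ_p⁴` is identified with `ℤ_p⁴`
via `(a,b,c,d) ↦ (p⁻¹a, b, c, d)`.  Under this identification the standard symplectic pairing
`⟨x,y⟩ = x₁y₄ + x₂y₃ − x₃y₂ − x₄y₁` becomes the following `ℚ_p`-valued pairing on `ℤ_p⁴`. -/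
noncomputable def spPara (p : ℕ) [Fact p.Prime] (u v : Fin 4 → ℤ_[p]) : ℚ_[p] :=
  ((u 0 * v 3 : ℤ_[p]) : ℚ_[p]) / (p : ℚ_[p]) + ((u 1 * v 2 : ℤ_[p]) : ℚ_[p])
    - ((u 2 * v 1 : ℤ_[p]) : ℚ_[p]) - ((u 3 * v 0 : ℤ_[p]) : ℚ_[p]) / (p : ℚ_[p])

/-- `x ∈ L` is primitive if `x ∉ pL`. -/
def ParaPrimitive (p : ℕ) [Fact p.Prime] (x : Fin 4 → ℤ_[p]) : Prop :=
  ¬ ∀ i, (p : ℤ_[p]) ∣ x i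

/-- A primitive element of type (I): `⟨x,y⟩ ∈ p⁻¹ℤ_p ∖ ℤ_p` for some `y ∈ L`. -/
def PrimTypeI (p : ℕ) [Fact p.Prime] (x : Fin 4 → ℤ_[p]) : Prop :=
  ParaPrimitive p x ∧ ∃ y : Fin 4 → ℤ_[p], ¬ ‖spPara p x y‖ ≤ 1

/-- A primitive element of type (II): `⟨x,y⟩ ∈ ℤ_p` for every `y ∈ L`. -/
def PrimTypeII (p : ℕ) [Fact p.Prime] (x : Fin 4 → ℤ_[p]) : Prop :=
  ParaPrimitive p x ∧ ∀ y : Fin 4 → ℤ_[p], ‖spPara p x y‖ ≤ 1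


set_option maxHeartbeats 1000000

lemma padic_dvd_of_div_norm_le {p : ℕ} [Fact p.Prime] {z : ℤ_[p]}
    (h : ‖(z : ℚ_[p]) / (p : ℚ_[p])‖ ≤ 1) : (p : ℤ_[p]) ∣ z := by
  have hp1 : (1:ℝ) < p := by exact_mod_cast (Fact.out : p.Prime).one_lt
  rw [norm_div, Padic.norm_p, div_le_one (by positivity)] at h
  rw [← PadicInt.norm_lt_one_iff_dvd, PadicInt.norm_def]
  calc ‖(z:ℚ_[p])‖ ≤ (p:ℝ)⁻¹ := h
    _ < 1 := by rw [inv_lt_one_iff₀]; right; exact hp1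

lemma padic_unit_sub {p : ℕ} [Fact p.Prime] {a b c d : ℤ_[p]} (ha : ¬ (p:ℤ_[p]) ∣ a)
    (hb : ¬ (p:ℤ_[p]) ∣ b) (hd : (p:ℤ_[p]) ∣ d) : IsUnit (a * b - c * d) := by
  by_contra h
  rw [PadicInt.not_isUnit_iff, PadicInt.norm_lt_one_iff_dvd] at h
  have hab : (p:ℤ_[p]) ∣ a * b := by
    have := dvd_add h (hd.mul_left c)
    simpa using this
  rcases PadicInt.prime_p.2.2 _ _ hab with h' | h' <;> [exact ha h'; exact hb h']

open Submodule in
lemma aux_basis {p : ℕ} [Fact p.Prime] (x y : Fin 4 → ℤ_[p]) (v : Fin 4 → Fin 4 → ℤ_[p])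
    (h0 : v 0 = x) (h1 : v 1 = y)
    (hdet : IsUnit ((Pi.basisFun ℤ_[p] (Fin 4)).det v)) :
    (∃ J : Submodule ℤ_[p] (Fin 4 → ℤ_[p]),
        IsCompl (Submodule.span ℤ_[p] {x, y}) J) ∧
    LinearIndependent ℤ_[p] ![x, y] := by
  obtain ⟨hli, hsp⟩ := (Module.Basis.is_basis_iff_det (Pi.basisFun ℤ_[p] (Fin 4))).mpr hdet
  have him1 : ({x, y} : Set (Fin 4 → ℤ_[p])) = v '' {0, 1} := by
    rw [Set.image_insert_eq, Set.image_singleton, h0, h1]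
  have him2 : ({v 2, v 3} : Set (Fin 4 → ℤ_[p])) = v '' {2, 3} := by
    rw [Set.image_insert_eq, Set.image_singleton]
  constructor
  · refine ⟨span ℤ_[p] {v 2, v 3}, ?_, ?_⟩
    · rw [him1, him2]
      refine hli.disjoint_span_image ?_
      rw [Set.disjoint_left]
      rintro a (rfl | rfl) hmem <;> simp_all
    · rw [codisjoint_iff, him1, him2, ← Submodule.span_union, ← Set.image_union]
      have huniv : ({0, 1} ∪ {2, 3} : Set (Fin 4)) = Set.univ := by
        ext i; fin_cases i <;> simp
      rw [huniv, Set.image_univ, hsp]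
  · have he : ![x, y] = v ∘ (![0, 1] : Fin 2 → Fin 4) := by
      funext i; fin_cases i <;> simp [h0, h1]
    rw [he]
    exact hli.comp _ (by decide)

/-- If `x ∈ L` is primitive of type (I) and `y ∈ L` is primitive of type (II), then the
`ℤ_p`-submodule of `L` generated by `x` and `y` is a direct summand of `L` of rank 2. -/
theorem typeI_typeII_span_direct_summand
    (p : ℕ) [Fact p.Prime] (x y : Fin 4 → ℤ_[p])
    (hx : PrimTypeI p x) (hy : PrimTypeII p y) :
    (∃ J : Submodule ℤ_[p] (Fin 4 → ℤ_[p]),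
        IsCompl (Submodule.span ℤ_[p] {x, y}) J) ∧
    LinearIndependent ℤ_[p] ![x, y] := by
  obtain ⟨hxprim, w, hw⟩ := hx
  obtain ⟨hyprim, hy2⟩ := hy
  have hy3 : (p : ℤ_[p]) ∣ y 3 := by
    apply padic_dvd_of_div_norm_le (p := p)
    have := hy2 ![1, 0, 0, 0]
    simp [spPara] at this
    simpa using this
  have hy0 : (p : ℤ_[p]) ∣ y 0 := by
    apply padic_dvd_of_div_norm_le (p := p)
    have := hy2 ![0, 0, 0, 1]
    simp [spPara] at this
    simpa using this
  have hx03 : ¬ (p:ℤ_[p]) ∣ x 0 ∨ ¬ (p:ℤ_[p]) ∣ x 3 := by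
    by_contra h
    push_neg at h
    obtain ⟨⟨a, ha⟩, ⟨b, hb⟩⟩ := h
    apply hw
    have hp : (p : ℚ_[p]) ≠ 0 := by
      exact_mod_cast (Fact.out : p.Prime).ne_zero
    have he : spPara p x w
        = ((a * w 3 + x 1 * w 2 - x 2 * w 1 - b * w 0 : ℤ_[p]) : ℚ_[p]) := by
      simp only [spPara, ha, hb]
      push_cast
      field_simp
    rw [he, ← PadicInt.norm_def]
    exact PadicInt.norm_le_one _
  have hy12 : ¬ (p:ℤ_[p]) ∣ y 1 ∨ ¬ (p:ℤ_[p]) ∣ y 2 := by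
    by_contra h
    push_neg at h
    exact hyprim (fun i => by fin_cases i <;> simp [hy0, hy3, h.1, h.2])
  rcases hx03 with hx0 | hx3 <;> rcases hy12 with hy1 | hyy2
  · refine aux_basis x y ![x, y, ![0,0,1,0], ![0,0,0,1]] rfl rfl ?_
    have : ((Pi.basisFun ℤ_[p] (Fin 4)).det ![x, y, ![0,0,1,0], ![0,0,0,1]])
        = x 0 * y 1 - x 1 * y 0 := by
      simp [-Pi.basisFun_det, Module.Basis.det_apply, Module.Basis.toMatrix_apply, Matrix.det_succ_row_zero,
        Fin.sum_univ_succ, Fin.succAbove]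
      norm_num [Fin.lt_def, Fin.castSucc, Fin.castAdd, Fin.castLE, Fin.succ]
      ring
    rw [this]
    exact padic_unit_sub hx0 hy1 hy0
  · refine aux_basis x y ![x, y, ![0,1,0,0], ![0,0,0,1]] rfl rfl ?_
    have : ((Pi.basisFun ℤ_[p] (Fin 4)).det ![x, y, ![0,1,0,0], ![0,0,0,1]])
        = -(x 0 * y 2 - x 2 * y 0) := by
      simp [-Pi.basisFun_det, Module.Basis.det_apply, Module.Basis.toMatrix_apply, Matrix.det_succ_row_zero,
        Fin.sum_univ_succ, Fin.succAbove]
      norm_num [Fin.lt_def, Fin.castSucc, Fin.castAdd, Fin.castLE, Fin.succ]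
      ring
    rw [this]
    exact (padic_unit_sub hx0 hyy2 hy0).neg
  · refine aux_basis x y ![x, y, ![1,0,0,0], ![0,0,1,0]] rfl rfl ?_
    have : ((Pi.basisFun ℤ_[p] (Fin 4)).det ![x, y, ![1,0,0,0], ![0,0,1,0]])
        = x 3 * y 1 - x 1 * y 3 := by
      simp [-Pi.basisFun_det, Module.Basis.det_apply, Module.Basis.toMatrix_apply, Matrix.det_succ_row_zero,
        Fin.sum_univ_succ, Fin.succAbove]
      norm_num [Fin.lt_def, Fin.castSucc, Fin.castAdd, Fin.castLE, Fin.succ]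
      ring
    rw [this]
    exact padic_unit_sub hx3 hy1 hy3
  · refine aux_basis x y ![x, y, ![1,0,0,0], ![0,1,0,0]] rfl rfl ?_
    have : ((Pi.basisFun ℤ_[p] (Fin 4)).det ![x, y, ![1,0,0,0], ![0,1,0,0]])
        = -(x 3 * y 2 - x 2 * y 3) := by
      simp [-Pi.basisFun_det, Module.Basis.det_apply, Module.Basis.toMatrix_apply, Matrix.det_succ_row_zero,
        Fin.sum_univ_succ, Fin.succAbove]
      norm_num [Fin.lt_def, Fin.castSucc, Fin.castAdd, Fin.castLE, Fin.succ]
      ring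
    rw [this]
    exact (padic_unit_sub hx3 hyy2 hy3).neg
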